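/- arXiv:2307.14160 — 6 statements merged into one kernel-verified Lean document; each statement's English description precedes it below -/
import Mathlib

section
/- Let S be a real symmetric matrix indexed by ι = Fin q ⊕ Fin q, let λ₁ ≥ 0 and let λ₂ ≥ λ₂^sym. Then for every positive definite symmetric real matrix Θ indexed by ι, the J-symmetrized matrix Θ̄ := (Θ + JΘJ)/2 satisfies L(Θ̄) ≤ L(Θ); moreover Θ̄ is fully symmetric, i.e. JΘ̄J = Θ̄. (This is the inequality proved for Theorem 1: any sufficiently penalized pdglasso objective is not increased by full symmetrization.) -/
open Matrix Sum

/-- The swap permutation matrix `J = fromBlocks 0 I I 0` on `Fin q ⊕ Fin q`. -/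
noncomputable def Jswap (q : ℕ) : Matrix (Fin q ⊕ Fin q) (Fin q ⊕ Fin q) ℝ :=
  Matrix.fromBlocks 0 1 1 0

/-- Entrywise ℓ1 norm of a real matrix. -/
noncomputable def l1norm {m n : Type*} [Fintype m] [Fintype n] (A : Matrix m n ℝ) : ℝ :=
  ∑ i, ∑ j, |A i j|

/-- The pdglasso objective
`L(Θ) = -log det Θ + tr(SΘ) + λ₁‖Θ‖₁ + λ₂(‖Θ_LL - Θ_RR‖₁ + ‖Θ_LR - Θ_RL‖₁)`. -/
noncomputable def pdObjective {q : ℕ} (S : Matrix (Fin q ⊕ Fin q) (Fin q ⊕ Fin q) ℝ)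
    (l1 l2 : ℝ) (Θ : Matrix (Fin q ⊕ Fin q) (Fin q ⊕ Fin q) ℝ) : ℝ :=
  -Real.log Θ.det + (S * Θ).trace + l1 * l1norm Θ
    + l2 * (l1norm (Θ.toBlocks₁₁ - Θ.toBlocks₂₂) + l1norm (Θ.toBlocks₁₂ - Θ.toBlocks₂₁))

open scoped MatrixOrder in
/-- Minkowski-type inequality: for `A` positive definite and `B` positive semidefinite with
`det A = det B`, the average `(A+B)/2` has determinant at least `det A`. -/
lemma det_le_det_half_add {n : Type*} [Fintype n] [DecidableEq n]
    {A B : Matrix n n ℝ} (hA : A.PosDef) (hB : B.PosSemidef) (h : A.det = B.det) :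
    A.det ≤ ((1/2 : ℝ) • (A + B)).det := by
  set C := CFC.sqrt A with hCdef
  have hC : C.PosSemidef := (CFC.sqrt_nonneg A).posSemidef
  have hCC : C * C = A := CFC.sqrt_mul_sqrt_self A hA.posSemidef.nonneg
  have hdetC2 : C.det * C.det = A.det := by rw [← det_mul, hCC]
  have hdetC : C.det ≠ 0 := by
    intro h0
    have := hA.det_pos
    rw [← hdetC2, h0, zero_mul] at this
    exact lt_irrefl _ this
  have hCu : IsUnit C.det := isUnit_iff_ne_zero.mpr hdetC
  have hCherm : Cᴴ = C := hC.isHermitian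
  have hCinvH : (C⁻¹)ᴴ = C⁻¹ := by rw [conjTranspose_nonsing_inv, hCherm]
  set M := C⁻¹ * B * C⁻¹ with hMdef
  have hM : M.PosSemidef := by
    have := hB.conjTranspose_mul_mul_same (C⁻¹)
    rwa [hCinvH] at this
  have hdetM : M.det = 1 := by
    rw [hMdef, det_mul, det_mul, det_nonsing_inv, ← h, ← hdetC2]
    field_simp
    rw [← mul_pow, Ring.inverse_mul_cancel _ hCu, one_pow]
  have h1 : C * C⁻¹ = 1 := mul_nonsing_inv _ hCu
  have h2 : C⁻¹ * C = 1 := nonsing_inv_mul _ hCu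
  have key : (1/2 : ℝ) • (A + B) = C * ((1/2 : ℝ) • (1 + M)) * C := by
    have hB' : C * (C⁻¹ * B * C⁻¹) * C = B := by
      rw [show C * (C⁻¹ * B * C⁻¹) * C = (C * C⁻¹) * B * (C⁻¹ * C) by
        simp only [Matrix.mul_assoc], h1, h2, Matrix.one_mul, Matrix.mul_one]
    rw [mul_smul_comm, smul_mul_assoc, mul_add, add_mul, Matrix.mul_one, hCC, hMdef, hB']
  have hMh : M.IsHermitian := hM.isHermitian
  set U : Matrix n n ℝ := (hMh.eigenvectorUnitary : Matrix n n ℝ) with hU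
  have hUU : star U * U = 1 := Matrix.mem_unitaryGroup_iff'.mp hMh.eigenvectorUnitary.2
  have hdiag : star U * M * U = diagonal hMh.eigenvalues := by
    have := hMh.conjStarAlgAut_star_eigenvectorUnitary
    simpa using this
  have hdiag2 : star U * ((1/2 : ℝ) • (1 + M)) * U
      = diagonal (fun i => (1 + hMh.eigenvalues i) / 2) := by
    rw [mul_smul_comm, smul_mul_assoc, mul_add, add_mul, Matrix.mul_one, hUU, hdiag]
    ext i j
    by_cases hij : i = j <;>
      simp [hij, Matrix.one_apply, Matrix.diagonal_apply, Matrix.smul_apply]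
    ring
  have hdmid : ((1/2 : ℝ) • (1 + M)).det = ∏ i, (1 + hMh.eigenvalues i) / 2 := by
    have hcong := congrArg det hdiag2
    rw [det_mul, det_mul, det_diagonal] at hcong
    have hUU' : (star U).det * U.det = 1 := by rw [← det_mul, hUU, det_one]
    calc ((1/2 : ℝ) • (1 + M)).det
        = (star U).det * ((1/2 : ℝ) • (1 + M)).det * U.det := by
          rw [mul_comm ((star U).det), mul_assoc, hUU', mul_one]
      _ = ∏ i, (1 + hMh.eigenvalues i) / 2 := hcong
  have hev : ∀ i, 0 ≤ hMh.eigenvalues i := hM.eigenvalues_nonneg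
  have hprod1 : (∏ i, hMh.eigenvalues i) = 1 := by
    have := hMh.det_eq_prod_eigenvalues
    rw [hdetM] at this
    simpa using this.symm
  have hsqrtprod : (∏ i, Real.sqrt (hMh.eigenvalues i)) = 1 := by
    have hsq : (∏ i, Real.sqrt (hMh.eigenvalues i)) ^ 2 = 1 := by
      rw [← Finset.prod_pow]
      rw [show (∏ i, Real.sqrt (hMh.eigenvalues i) ^ 2) = ∏ i, hMh.eigenvalues i from
        Finset.prod_congr rfl fun i _ => Real.sq_sqrt (hev i), hprod1]
    have hnn : 0 ≤ ∏ i, Real.sqrt (hMh.eigenvalues i) :=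
      Finset.prod_nonneg fun i _ => Real.sqrt_nonneg _
    nlinarith
  have hone_le : (1 : ℝ) ≤ ((1/2 : ℝ) • (1 + M)).det := by
    rw [hdmid, ← hsqrtprod]
    refine Finset.prod_le_prod (fun i _ => Real.sqrt_nonneg _) (fun i _ => ?_)
    nlinarith [Real.sq_sqrt (hev i), sq_nonneg (Real.sqrt (hMh.eigenvalues i) - 1)]
  calc A.det = A.det * 1 := (mul_one _).symm
    _ ≤ A.det * ((1/2 : ℝ) • (1 + M)).det :=
        mul_le_mul_of_nonneg_left hone_le (le_of_lt hA.det_pos)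
    _ = ((1/2 : ℝ) • (A + B)).det := by
        rw [key, det_mul, det_mul, ← hdetC2]; ring

/-- `Jswap` is the permutation matrix of `Equiv.sumComm`. -/
lemma Jswap_eq_perm (q : ℕ) :
    Jswap q = ((Equiv.sumComm (Fin q) (Fin q)).toPEquiv.toMatrix
      : Matrix (Fin q ⊕ Fin q) (Fin q ⊕ Fin q) ℝ) := by
  ext i j
  cases i <;> cases j <;>
    simp [Jswap, PEquiv.toMatrix, Equiv.toPEquiv_apply, Matrix.one_apply, eq_comm]

/-- Conjugation by `Jswap` is reindexing along `Equiv.sumComm`. -/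
lemma Jswap_conj (q : ℕ) (A : Matrix (Fin q ⊕ Fin q) (Fin q ⊕ Fin q) ℝ) :
    Jswap q * A * Jswap q = A.submatrix (Equiv.sumComm (Fin q) (Fin q))
      (Equiv.sumComm (Fin q) (Fin q)) := by
  rw [Jswap_eq_perm, PEquiv.toMatrix_toPEquiv_mul, PEquiv.mul_toMatrix_toPEquiv]
  simp [Matrix.submatrix_submatrix]

lemma Jswap_mul_Jswap (q : ℕ) : Jswap q * Jswap q = 1 := by
  rw [Jswap, Matrix.fromBlocks_multiply]
  simp [← Matrix.fromBlocks_one]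

/-- if `λ₂ ≥ λ₂^sym` then for every positive definite symmetric `Θ` the
`J`-symmetrization `Θ̄ = (Θ + JΘJ)/2` satisfies `L(Θ̄) ≤ L(Θ)` and is fully symmetric. -/
theorem pdglasso_symmetrization_decreases_objective (q : ℕ) (hq : 0 < q)
    (S : Matrix (Fin q ⊕ Fin q) (Fin q ⊕ Fin q) ℝ) (hS : S.IsSymm)
    (l1 l2 : ℝ) (hl1 : 0 ≤ l1)
    (hl2 : ∀ i j : Fin q,
      max (|S (inl i) (inl j) - S (inr i) (inr j)| / 2)
          (|S (inr i) (inl j) - S (inl i) (inr j)| / 2) ≤ l2)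
    (Θ : Matrix (Fin q ⊕ Fin q) (Fin q ⊕ Fin q) ℝ) (hΘ : Θ.PosDef) (hΘs : Θ.IsSymm) :
    pdObjective S l1 l2 ((1 / 2 : ℝ) • (Θ + Jswap q * Θ * Jswap q))
        ≤ pdObjective S l1 l2 Θ ∧
      Jswap q * ((1 / 2 : ℝ) • (Θ + Jswap q * Θ * Jswap q)) * Jswap q
        = (1 / 2 : ℝ) • (Θ + Jswap q * Θ * Jswap q) := by
  set σ : (Fin q ⊕ Fin q) ≃ (Fin q ⊕ Fin q) := Equiv.sumComm (Fin q) (Fin q) with hσ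
  set Θb : Matrix (Fin q ⊕ Fin q) (Fin q ⊕ Fin q) ℝ
    := (1 / 2 : ℝ) • (Θ + Jswap q * Θ * Jswap q) with hΘb
  -- full symmetry
  have hJ2 : ∀ A : Matrix (Fin q ⊕ Fin q) (Fin q ⊕ Fin q) ℝ,
      Jswap q * (Jswap q * A * Jswap q) * Jswap q = A := by
    intro A
    rw [show Jswap q * (Jswap q * A * Jswap q) * Jswap q
        = (Jswap q * Jswap q) * A * (Jswap q * Jswap q) by simp only [Matrix.mul_assoc],
      Jswap_mul_Jswap, Matrix.one_mul, Matrix.mul_one]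
  have hfull : Jswap q * Θb * Jswap q = Θb := by
    rw [hΘb, mul_smul_comm, smul_mul_assoc, mul_add, add_mul, hJ2, add_comm]
  have hbar : Θb.submatrix σ σ = Θb := by rw [← Jswap_conj]; exact hfull
  refine ⟨?_, hfull⟩
  -- the symmetrized penalty vanishes
  have hb11 : Θb.toBlocks₁₁ - Θb.toBlocks₂₂ = 0 := by
    ext i j
    have h := congrFun (congrFun hbar (inl i)) (inl j)
    simp only [Matrix.submatrix_apply, hσ, Equiv.sumComm_apply, Sum.swap_inl] at h
    simp [Matrix.toBlocks₁₁, Matrix.toBlocks₂₂, h]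
  have hb12 : Θb.toBlocks₁₂ - Θb.toBlocks₂₁ = 0 := by
    ext i j
    have h := congrFun (congrFun hbar (inl i)) (inr j)
    simp only [Matrix.submatrix_apply, hσ, Equiv.sumComm_apply, Sum.swap_inl, Sum.swap_inr] at h
    simp [Matrix.toBlocks₁₂, Matrix.toBlocks₂₁, h]
  -- determinant part
  have hdet : Θ.det ≤ Θb.det := by
    refine det_le_det_half_add hΘ ?_ ?_
    · rw [Jswap_conj]
      exact (Matrix.posSemidef_submatrix_equiv σ).mpr hΘ.posSemidef
    · rw [Jswap_conj, Matrix.det_submatrix_equiv_self]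
  have hlog : -Real.log Θb.det ≤ -Real.log Θ.det := by
    have := Real.log_le_log hΘ.det_pos hdet
    linarith
  -- ℓ1 part
  have hswapl1 : ∀ A : Matrix (Fin q ⊕ Fin q) (Fin q ⊕ Fin q) ℝ,
      (∑ i, ∑ j, |A (σ i) (σ j)|) = l1norm A := by
    intro A
    calc (∑ i, ∑ j, |A (σ i) (σ j)|) = ∑ i, ∑ j, |A i (σ j)| :=
          Fintype.sum_equiv σ (fun i => ∑ j, |A (σ i) (σ j)|) (fun i => ∑ j, |A i (σ j)|)
            fun i => rfl
      _ = ∑ i, ∑ j, |A i j| := Finset.sum_congr rfl fun i _ =>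
          Fintype.sum_equiv σ (fun j => |A i (σ j)|) (fun j => |A i j|) fun j => rfl
      _ = l1norm A := rfl
  have hl1le : l1norm Θb ≤ l1norm Θ := by
    have hent : ∀ i j, Θb i j = (1/2 : ℝ) * (Θ i j + Θ (σ i) (σ j)) := by
      intro i j
      rw [hΘb, Jswap_conj]
      simp [hσ, Matrix.smul_apply, Matrix.add_apply, Matrix.submatrix_apply,
        Equiv.sumComm_apply]
    calc l1norm Θb = ∑ i, ∑ j, |(1/2 : ℝ) * (Θ i j + Θ (σ i) (σ j))| := by
          rw [l1norm]
          exact Finset.sum_congr rfl fun i _ => Finset.sum_congr rfl fun j _ => by rw [hent]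
      _ ≤ ∑ i, ∑ j, (|Θ i j| / 2 + |Θ (σ i) (σ j)| / 2) := by
          refine Finset.sum_le_sum fun i _ => Finset.sum_le_sum fun j _ => ?_
          rw [abs_mul]
          have := abs_add_le (Θ i j) (Θ (σ i) (σ j))
          rw [abs_of_nonneg (by norm_num : (0:ℝ) ≤ 1/2)]
          linarith
      _ = (∑ i, ∑ j, |Θ i j|) / 2 + (∑ i, ∑ j, |Θ (σ i) (σ j)|) / 2 := by
          simp only [Finset.sum_add_distrib, ← Finset.sum_div]
      _ = l1norm Θ := by rw [hswapl1, l1norm]; ring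
  -- trace part
  have hl2' : ∀ a b : Fin q, |S (inl a) (inl b) - S (inr a) (inr b)| ≤ 2 * l2 ∧
      |S (inr a) (inl b) - S (inl a) (inr b)| ≤ 2 * l2 := by
    intro a b
    have h := hl2 a b
    rw [max_le_iff] at h
    exact ⟨by linarith [h.1], by linarith [h.2]⟩
  have hexp : ∀ X : Matrix (Fin q ⊕ Fin q) (Fin q ⊕ Fin q) ℝ,
      (S * X).trace = ∑ i, ∑ j, S i j * X j i := by
    intro X
    simp [Matrix.trace, Matrix.mul_apply, Matrix.diag]
  set pen : ℝ := l1norm (Θ.toBlocks₁₁ - Θ.toBlocks₂₂) + l1norm (Θ.toBlocks₁₂ - Θ.toBlocks₂₁)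
    with hpen
  clear_value pen
  have htrb : (S * Θb).trace
      = (1/2 : ℝ) * ((S * Θ).trace + (S * Θ.submatrix σ σ).trace) := by
    rw [hΘb, Jswap_conj, mul_smul_comm, trace_smul, mul_add, trace_add, smul_eq_mul]
  have hG : ∀ a b : Fin q,
      (S (inl a) (inl b) - S (inr a) (inr b)) * (Θ (inr b) (inr a) - Θ (inl b) (inl a))
        + (S (inr a) (inl b) - S (inl a) (inr b)) * (Θ (inr b) (inl a) - Θ (inl b) (inr a))
      ≤ 2 * l2 * (|Θ (inl b) (inl a) - Θ (inr b) (inr a)|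
          + |Θ (inl b) (inr a) - Θ (inr b) (inl a)|) := by
    intro a b
    obtain ⟨h1, h2⟩ := hl2' a b
    have g1 : (S (inl a) (inl b) - S (inr a) (inr b)) * (Θ (inr b) (inr a) - Θ (inl b) (inl a))
        ≤ 2 * l2 * |Θ (inl b) (inl a) - Θ (inr b) (inr a)| := by
      calc _ ≤ |(S (inl a) (inl b) - S (inr a) (inr b))
            * (Θ (inr b) (inr a) - Θ (inl b) (inl a))| := le_abs_self _
        _ = |S (inl a) (inl b) - S (inr a) (inr b)| * |Θ (inr b) (inr a) - Θ (inl b) (inl a)| :=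
            abs_mul _ _
        _ ≤ 2 * l2 * |Θ (inr b) (inr a) - Θ (inl b) (inl a)| :=
            mul_le_mul_of_nonneg_right h1 (abs_nonneg _)
        _ = 2 * l2 * |Θ (inl b) (inl a) - Θ (inr b) (inr a)| := by rw [abs_sub_comm]
    have g2 : (S (inr a) (inl b) - S (inl a) (inr b)) * (Θ (inr b) (inl a) - Θ (inl b) (inr a))
        ≤ 2 * l2 * |Θ (inl b) (inr a) - Θ (inr b) (inl a)| := by
      calc _ ≤ |(S (inr a) (inl b) - S (inl a) (inr b))
            * (Θ (inr b) (inl a) - Θ (inl b) (inr a))| := le_abs_self _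
        _ = |S (inr a) (inl b) - S (inl a) (inr b)| * |Θ (inr b) (inl a) - Θ (inl b) (inr a)| :=
            abs_mul _ _
        _ ≤ 2 * l2 * |Θ (inr b) (inl a) - Θ (inl b) (inr a)| :=
            mul_le_mul_of_nonneg_right h2 (abs_nonneg _)
        _ = 2 * l2 * |Θ (inl b) (inr a) - Θ (inr b) (inl a)| := by rw [abs_sub_comm]
    linarith
  have e1 : (∑ i, ∑ j, S i j * (Θ.submatrix σ σ) j i)
      = (∑ i, ∑ j, S i j * Θ j i)
        + ∑ a, ∑ b,
          ((S (inl a) (inl b) - S (inr a) (inr b)) * (Θ (inr b) (inr a) - Θ (inl b) (inl a))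
            + (S (inr a) (inl b) - S (inl a) (inr b))
              * (Θ (inr b) (inl a) - Θ (inl b) (inr a))) := by
    simp only [Fintype.sum_sum_type, Matrix.submatrix_apply, hσ, Equiv.sumComm_apply,
      Sum.swap_inl, Sum.swap_inr]
    simp only [← Finset.sum_add_distrib]
    refine Finset.sum_congr rfl fun a _ => Finset.sum_congr rfl fun b _ => by ring
  have epen : (∑ a, ∑ b, (2 * l2 * (|Θ (inl b) (inl a) - Θ (inr b) (inr a)|
      + |Θ (inl b) (inr a) - Θ (inr b) (inl a)|))) = 2 * l2 * pen := by
    rw [show (∑ a, ∑ b, (2 * l2 * (|Θ (inl b) (inl a) - Θ (inr b) (inr a)|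
        + |Θ (inl b) (inr a) - Θ (inr b) (inl a)|)))
      = 2 * l2 * ∑ a, ∑ b, (|Θ (inl b) (inl a) - Θ (inr b) (inr a)|
        + |Θ (inl b) (inr a) - Θ (inr b) (inl a)|) by
      rw [Finset.mul_sum]
      exact Finset.sum_congr rfl fun a _ => (Finset.mul_sum _ _ _).symm]
    congr 1
    rw [hpen]
    have p1 : l1norm (Θ.toBlocks₁₁ - Θ.toBlocks₂₂)
        = ∑ a, ∑ b, |Θ (inl b) (inl a) - Θ (inr b) (inr a)| := by
      rw [l1norm, Finset.sum_comm]
      exact Finset.sum_congr rfl fun a _ => Finset.sum_congr rfl fun b _ => by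
        simp [Matrix.toBlocks₁₁, Matrix.toBlocks₂₂]
    have p2 : l1norm (Θ.toBlocks₁₂ - Θ.toBlocks₂₁)
        = ∑ a, ∑ b, |Θ (inl b) (inr a) - Θ (inr b) (inl a)| := by
      rw [l1norm, Finset.sum_comm]
      exact Finset.sum_congr rfl fun a _ => Finset.sum_congr rfl fun b _ => by
        simp [Matrix.toBlocks₁₂, Matrix.toBlocks₂₁]
    rw [p1, p2, ← Finset.sum_add_distrib]
    exact Finset.sum_congr rfl fun a _ => by rw [← Finset.sum_add_distrib]
  have htr : (S * Θb).trace ≤ (S * Θ).trace + l2 * pen := by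
    have hkey : (S * Θ.submatrix σ σ).trace ≤ (S * Θ).trace + 2 * l2 * pen := by
      rw [hexp, hexp, e1, ← epen]
      have := Finset.sum_le_sum (s := (Finset.univ : Finset (Fin q))) fun a _ =>
        Finset.sum_le_sum (s := (Finset.univ : Finset (Fin q))) fun b _ => hG a b
      linarith
    rw [htrb]
    nlinarith [hkey]
  -- assemble
  rw [pdObjective, pdObjective, hb11, hb12]
  have hz : l1norm (0 : Matrix (Fin q) (Fin q) ℝ) = 0 := by simp [l1norm]
  rw [hz]
  have hl1mul : l1 * l1norm Θb ≤ l1 * l1norm Θ := mul_le_mul_of_nonneg_left hl1le hl1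
  rw [hpen] at htr
  linarith
end

section
/- (Proposition 1, inequality form.) Let S be a real symmetric matrix indexed by ι = Fin q ⊕ Fin q, let λ₂ ≥ 0 and suppose λ₁ ≥ |S i j| for all i, j ∈ ι with i ≠ j. Then for every positive definite symmetric real matrix Θ indexed by ι, the diagonal matrix diag(Θ) (the matrix with the same diagonal as Θ and zeros off the diagonal) is positive definite and L(diag(Θ)) ≤ L(Θ). -/
open Matrix Sum

section Helpers

lemma posDef_diag_pos {n : Type*} [Fintype n] [DecidableEq n] {M : Matrix n n ℝ}
    (hM : M.PosDef) (i : n) : 0 < M i i := by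
  have h := hM.dotProduct_mulVec_pos (x := Pi.single i 1) (by simp [Function.ne_iff])
  simpa [mulVec_single, dotProduct, Pi.single_apply, ite_mul] using h

lemma posSemidef_diag_nonneg {n : Type*} [Fintype n] [DecidableEq n] {M : Matrix n n ℝ}
    (hM : M.PosSemidef) (i : n) : 0 ≤ M i i := by
  have h := hM.dotProduct_mulVec_nonneg (Pi.single i 1)
  simpa [mulVec_single, dotProduct, Pi.single_apply, ite_mul] using h

lemma posDef_submatrix_inj {m n : Type*} [Fintype m] [Fintype n] [DecidableEq m] [DecidableEq n]
    {M : Matrix n n ℝ} (hM : M.PosDef) {e : m → n} (he : Function.Injective e) :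
    (M.submatrix e e).PosDef := by
  refine PosDef.of_dotProduct_mulVec_pos (hM.1.submatrix e) fun x hx => ?_
  set y : n → ℝ := Function.extend e x 0 with hy
  have hye : ∀ i, y (e i) = x i := fun i => he.extend_apply x 0 i
  have hy0 : y ≠ 0 := by
    obtain ⟨i, hi⟩ := Function.ne_iff.mp hx
    exact Function.ne_iff.mpr ⟨e i, by simpa [hye i] using hi⟩
  have hsum : ∀ w : n → ℝ, ∑ j, y j * w j = ∑ i, x i * w (e i) := by
    intro w
    have h1 : ∑ j, y j * w j = ∑ j ∈ Finset.univ.image e, y j * w j := by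
      symm
      apply Finset.sum_subset (Finset.subset_univ _)
      intro j _ hj
      have : y j = 0 := by
        apply Function.extend_apply'
        rintro ⟨i, rfl⟩
        exact hj (Finset.mem_image.mpr ⟨i, Finset.mem_univ i, rfl⟩)
      simp [this]
    rw [h1, Finset.sum_image (fun a _ b _ h => he h)]
    simp [hye]
  have key : star y ⬝ᵥ M *ᵥ y = star x ⬝ᵥ (M.submatrix e e) *ᵥ x := by
    simp only [star_trivial, dotProduct, mulVec, submatrix_apply]
    rw [hsum]
    congr 1; ext i
    congr 1
    calc ∑ j, M (e i) j * y j = ∑ j, y j * M (e i) j := by simp [mul_comm]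
      _ = ∑ i', x i' * M (e i) (e i') := hsum _
      _ = ∑ i', M (e i) (e i') * x i' := by simp [mul_comm]
  rw [← key]
  exact hM.dotProduct_mulVec_pos hy0

lemma posDef_of_posSemidef_det_ne_zero {n : Type*} [Fintype n] [DecidableEq n]
    {M : Matrix n n ℝ} (hM : M.PosSemidef) (hd : M.det ≠ 0) : M.PosDef := by
  refine PosDef.of_dotProduct_mulVec_pos hM.1 fun x hx => lt_of_le_of_ne (hM.dotProduct_mulVec_nonneg x) fun heq => hx ?_
  have h0 : M *ᵥ x = 0 := (hM.dotProduct_mulVec_zero_iff x).mp heq.symm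
  have : M⁻¹ *ᵥ (M *ᵥ x) = x := by
    rw [mulVec_mulVec, nonsing_inv_mul M (isUnit_iff_ne_zero.mpr hd), one_mulVec]
  rw [← this, h0, mulVec_zero]

lemma hadamard_fin : ∀ (n : ℕ) (A : Matrix (Fin n) (Fin n) ℝ), A.PosDef → A.det ≤ ∏ i, A i i := by
  intro n
  induction n with
  | zero => intro A hA; simp [Matrix.det_fin_zero]
  | succ n ih =>
    intro A hA
    set e : Fin 1 ⊕ Fin n ≃ Fin (n + 1) := finSumFinEquiv.trans (finCongr (Nat.add_comm 1 n))
      with he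
    set B : Matrix (Fin 1 ⊕ Fin n) (Fin 1 ⊕ Fin n) ℝ := A.submatrix e e with hBdef
    have hB : B.PosDef := posDef_submatrix_inj hA e.injective
    have hdetBA : B.det = A.det := det_submatrix_equiv_self e A
    set W := B.toBlocks₁₁ with hW'
    set X := B.toBlocks₁₂ with hX'
    set Z := B.toBlocks₂₂ with hZ'
    have hsym : B.toBlocks₂₁ = Xᴴ := by
      ext i j
      have h := congrFun (congrFun hB.1 (Sum.inl j)) (Sum.inr i)
      simp only [conjTranspose_apply, star_trivial] at h
      simpa [hX', Matrix.toBlocks₂₁, Matrix.toBlocks₁₂, conjTranspose_apply] using h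
    have hBfrom : B = fromBlocks W X Xᴴ Z := by
      rw [← fromBlocks_toBlocks B, hsym]
    have hWpos : W.PosDef := by
      have : W = B.submatrix Sum.inl Sum.inl := rfl
      rw [this]; exact posDef_submatrix_inj hB Sum.inl_injective
    have hZpos : Z.PosDef := by
      have : Z = B.submatrix Sum.inr Sum.inr := rfl
      rw [this]; exact posDef_submatrix_inj hB Sum.inr_injective
    haveI : Invertible W := W.invertibleOfIsUnitDet (isUnit_iff_ne_zero.mpr hWpos.det_pos.ne')
    set Sc := Z - Xᴴ * W⁻¹ * X with hSc'
    have hScSemi : Sc.PosSemidef := by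
      rw [hSc']
      exact (PosDef.fromBlocks₁₁ X Z hWpos).mp (hBfrom ▸ hB.posSemidef)
    have hdetB : B.det = W.det * Sc.det := by
      conv_lhs => rw [hBfrom]
      rw [det_fromBlocks₁₁, Matrix.invOf_eq_nonsing_inv]
    have hScdet : 0 < Sc.det := by
      have h1 := hB.det_pos
      rw [hdetB] at h1
      have h2 := hWpos.det_pos
      nlinarith
    have hSc : Sc.PosDef := posDef_of_posSemidef_det_ne_zero hScSemi hScdet.ne'
    have hdiag : ∀ i, Sc i i ≤ Z i i := by
      intro i
      have h1 : 0 ≤ (Xᴴ * W⁻¹ * X) i i :=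
        posSemidef_diag_nonneg ((hWpos.inv.posSemidef).conjTranspose_mul_mul_same X) i
      have : Sc i i = Z i i - (Xᴴ * W⁻¹ * X) i i := by rw [hSc']; simp [Matrix.sub_apply]
      linarith
    have hprod : ∏ i, Sc i i ≤ ∏ i, Z i i :=
      Finset.prod_le_prod (fun i _ => (posDef_diag_pos hSc i).le) (fun i _ => hdiag i)
    have hWdet : W.det = B (Sum.inl 0) (Sum.inl 0) := det_fin_one W
    have hprodA : ∏ i, A i i = B (Sum.inl 0) (Sum.inl 0) * ∏ i, Z i i := by
      rw [← Fintype.prod_equiv e (fun k => B k k) (fun i => A i i) (fun k => rfl),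
        Fintype.prod_sum_type]
      simp [hZ', Matrix.toBlocks₂₂]
    calc A.det = W.det * Sc.det := by rw [← hdetBA, hdetB]
      _ ≤ W.det * ∏ i, Z i i :=
          mul_le_mul_of_nonneg_left ((ih Sc hSc).trans hprod) hWpos.det_pos.le
      _ = ∏ i, A i i := by rw [hWdet, hprodA]

lemma hadamard_ineq {n : Type*} [Fintype n] [DecidableEq n] {A : Matrix n n ℝ}
    (hA : A.PosDef) : A.det ≤ ∏ i, A i i := by
  set e := (Fintype.equivFin n).symm with he
  have h := hadamard_fin _ (A.submatrix e e) (posDef_submatrix_inj hA e.injective)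
  rw [det_submatrix_equiv_self] at h
  rwa [Fintype.prod_equiv e (fun k => A.submatrix e e k k) (fun i => A i i) (fun k => rfl)] at h

end Helpers

/-- Proposition 1, inequality form: if `λ₁ ≥ |s_ij|` for all `i ≠ j`, then
for every positive definite symmetric `Θ`, `diag(Θ)` is positive definite and
`L(diag(Θ)) ≤ L(Θ)`. -/
theorem pdglasso_diagonal_decreases_objective (q : ℕ) (hq : 0 < q)
    (S : Matrix (Fin q ⊕ Fin q) (Fin q ⊕ Fin q) ℝ) (hS : S.IsSymm)
    (l1 l2 : ℝ) (hl2 : 0 ≤ l2)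
    (hl1 : ∀ i j : Fin q ⊕ Fin q, i ≠ j → |S i j| ≤ l1)
    (Θ : Matrix (Fin q ⊕ Fin q) (Fin q ⊕ Fin q) ℝ) (hΘ : Θ.PosDef) (hΘs : Θ.IsSymm) :
    (Matrix.diagonal fun i => Θ i i).PosDef ∧
      pdObjective S l1 l2 (Matrix.diagonal fun i => Θ i i) ≤ pdObjective S l1 l2 Θ := by
  set D : Matrix (Fin q ⊕ Fin q) (Fin q ⊕ Fin q) ℝ := Matrix.diagonal fun i => Θ i i with hD
  have hdpos : ∀ i, 0 < Θ i i := posDef_diag_pos hΘ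
  have hDpos : D.PosDef := Matrix.PosDef.diagonal hdpos
  refine ⟨hDpos, ?_⟩
  have hΘsym : ∀ i j, Θ j i = Θ i j := fun i j => congrFun (congrFun hΘs i) j
  -- log part
  have hlog : -Real.log D.det ≤ -Real.log Θ.det := by
    have h1 : Θ.det ≤ D.det := by
      rw [hD, det_diagonal]; exact hadamard_ineq hΘ
    have h2 := Real.log_le_log hΘ.det_pos h1
    linarith
  -- trace and l1 part
  have htr : (S * Θ).trace = ∑ i, ∑ j, S i j * Θ j i := by
    simp [Matrix.trace, Matrix.diag, Matrix.mul_apply]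
  have htrD : (S * D).trace = ∑ i, S i i * Θ i i := by
    simp [Matrix.trace, Matrix.diag, Matrix.mul_apply, hD, Matrix.diagonal_apply, mul_ite]
  have hl1D : l1norm D = ∑ i, |Θ i i| := by
    simp [l1norm, hD, Matrix.diagonal_apply, apply_ite abs]
  have main : ∑ i, (S i i * Θ i i + l1 * |Θ i i|)
      ≤ ∑ i, ∑ j, (S i j * Θ j i + l1 * |Θ i j|) := by
    apply Finset.sum_le_sum
    intro i _
    rw [← Finset.add_sum_erase Finset.univ _ (Finset.mem_univ i)]
    have hnonneg : 0 ≤ ∑ j ∈ Finset.univ.erase i, (S i j * Θ j i + l1 * |Θ i j|) := by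
      apply Finset.sum_nonneg
      intro j hj
      have hne : i ≠ j := fun h => (Finset.ne_of_mem_erase hj) h.symm
      have h1 := hl1 i j hne
      have h2 : |S i j * Θ j i| ≤ l1 * |Θ i j| := by
        rw [abs_mul, hΘsym i j]
        exact mul_le_mul_of_nonneg_right h1 (abs_nonneg _)
      have h3 := neg_abs_le (S i j * Θ j i)
      linarith
    linarith
  have hL : (∑ i, S i i * Θ i i) + l1 * (∑ i, |Θ i i|)
      = ∑ i, (S i i * Θ i i + l1 * |Θ i i|) := by
    rw [Finset.mul_sum, ← Finset.sum_add_distrib]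
  have hR : (∑ i, ∑ j, S i j * Θ j i) + l1 * (∑ i, ∑ j, |Θ i j|)
      = ∑ i, ∑ j, (S i j * Θ j i + l1 * |Θ i j|) := by
    rw [Finset.mul_sum, ← Finset.sum_add_distrib]
    congr 1; ext i
    rw [Finset.mul_sum, ← Finset.sum_add_distrib]
  have key : (S * D).trace + l1 * l1norm D ≤ (S * Θ).trace + l1 * l1norm Θ := by
    rw [htrD, hl1D, htr, show l1norm Θ = ∑ i, ∑ j, |Θ i j| from rfl]
    linarith
  -- block penalty part
  have h12 : D.toBlocks₁₂ = 0 := by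
    ext i j; simp [hD, Matrix.toBlocks₁₂, Matrix.diagonal_apply]
  have h21 : D.toBlocks₂₁ = 0 := by
    ext i j; simp [hD, Matrix.toBlocks₂₁, Matrix.diagonal_apply]
  have ha : l1norm (D.toBlocks₁₂ - D.toBlocks₂₁) = 0 := by
    rw [h12, h21]; simp [l1norm]
  have hb : 0 ≤ l1norm (Θ.toBlocks₁₂ - Θ.toBlocks₂₁) :=
    Finset.sum_nonneg fun i _ => Finset.sum_nonneg fun j _ => abs_nonneg _
  have hc : l1norm (D.toBlocks₁₁ - D.toBlocks₂₂) ≤ l1norm (Θ.toBlocks₁₁ - Θ.toBlocks₂₂) := by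
    apply Finset.sum_le_sum
    intro i _
    apply Finset.sum_le_sum
    intro j _
    by_cases h : i = j
    · subst h
      apply le_of_eq
      congr 1
      simp [hD, Matrix.toBlocks₁₁, Matrix.toBlocks₂₂, Matrix.diagonal_apply, Matrix.sub_apply]
    · have : (D.toBlocks₁₁ - D.toBlocks₂₂) i j = 0 := by
        simp [hD, Matrix.toBlocks₁₁, Matrix.toBlocks₂₂, Matrix.diagonal_apply, Matrix.sub_apply, h]
      rw [this, abs_zero]
      exact abs_nonneg _
  have hblock : l2 * (l1norm (D.toBlocks₁₁ - D.toBlocks₂₂) + l1norm (D.toBlocks₁₂ - D.toBlocks₂₁))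
      ≤ l2 * (l1norm (Θ.toBlocks₁₁ - Θ.toBlocks₂₂) + l1norm (Θ.toBlocks₁₂ - Θ.toBlocks₂₁)) := by
    apply mul_le_mul_of_nonneg_left _ hl2
    linarith
  simp only [pdObjective]
  linarith
end

section
/- (Proposition 1, minimizer form.) Let S be a real symmetric matrix indexed by ι = Fin q ⊕ Fin q, let λ₂ ≥ 0 and suppose λ₁ ≥ |S i j| for all i, j ∈ ι with i ≠ j. If Θ̂ is a positive definite symmetric matrix that minimizes the pdglasso objective L over all positive definite symmetric matrices, then diag(Θ̂) is positive definite and is also a minimizer of L over all positive definite symmetric matrices; in particular the minimum of L is attained at a diagonal matrix. -/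
open Matrix Sum

lemma diag_pos' {n : Type*} [Fintype n] [DecidableEq n] {A : Matrix n n ℝ}
    (hA : A.PosDef) (i : n) : 0 < A i i := by
  have := hA.dotProduct_mulVec_pos (x := Pi.single i 1) (by simp [Function.ne_iff])
  simpa [dotProduct, mulVec, Pi.single_apply, Finset.sum_ite_eq] using this

lemma trace_eq_sum_eigs {n : Type*} [Fintype n] [DecidableEq n] {A : Matrix n n ℝ}
    (hA : A.IsHermitian) : A.trace = ∑ i, hA.eigenvalues i := by
  conv_lhs => rw [hA.spectral_theorem]
  rw [Unitary.conjStarAlgAut_apply, Matrix.trace_mul_cycle]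
  rw [(Matrix.mem_unitaryGroup_iff').mp (hA.eigenvectorUnitary).2, one_mul]
  simp [Matrix.trace_diagonal]

lemma posdef_congr_diag {n : Type*} [Fintype n] [DecidableEq n] {A : Matrix n n ℝ}
    (hA : A.PosDef) {e : n → ℝ} (he : ∀ i, e i ≠ 0) :
    (diagonal e * A * diagonal e).PosDef := by
  refine Matrix.PosDef.of_dotProduct_mulVec_pos ?_ ?_
  · have hAs : Aᵀ = A := hA.1
    unfold Matrix.IsHermitian
    rw [conjTranspose_eq_transpose_of_trivial, transpose_mul, transpose_mul, diagonal_transpose,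
      hAs, mul_assoc]
  · intro x hx
    have hy : (fun i => e i * x i) ≠ 0 := by
      rw [Function.ne_iff] at hx ⊢
      obtain ⟨i, hi⟩ := hx
      exact ⟨i, by simp [mul_ne_zero (he i) hi]⟩
    have := hA.dotProduct_mulVec_pos hy
    convert this using 1
    simp only [dotProduct, mulVec, star_trivial, Matrix.mul_apply, diagonal_apply, ite_mul,
      zero_mul, mul_ite, mul_zero, Finset.sum_ite_eq, Finset.sum_ite_eq', Finset.mem_univ,
      if_true]
    refine Finset.sum_congr rfl fun i _ => ?_
    rw [Finset.mul_sum, Finset.mul_sum]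
    refine Finset.sum_congr rfl fun j _ => ?_
    ring

lemma det_le_prod_diag {n : Type*} [Fintype n] [DecidableEq n] [Nonempty n]
    {A : Matrix n n ℝ} (hA : A.PosDef) : A.det ≤ ∏ i, A i i := by
  set d : n → ℝ := fun i => A i i with hdd
  have hd : ∀ i, 0 < d i := fun i => diag_pos' hA i
  set e : n → ℝ := fun i => (Real.sqrt (d i))⁻¹ with hee
  have he0 : ∀ i, 0 < e i := fun i => inv_pos.mpr (Real.sqrt_pos.mpr (hd i))
  set B := diagonal e * A * diagonal e with hB
  have hBpd : B.PosDef := posdef_congr_diag hA (fun i => (he0 i).ne')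
  have hBdiag : ∀ i, B i i = 1 := by
    intro i
    have : B i i = e i * A i i * e i := by
      simp [hB, Matrix.mul_apply, diagonal_apply, ite_mul, mul_ite, Finset.sum_ite_eq,
        Finset.sum_ite_eq']
    have hAd : A i i = d i := rfl
    rw [this, hee, hAd]
    rw [show ((Real.sqrt (d i))⁻¹ * d i * (Real.sqrt (d i))⁻¹)
        = d i / (Real.sqrt (d i) * Real.sqrt (d i)) by ring,
      Real.mul_self_sqrt (hd i).le, div_self (hd i).ne']
  set μ := hBpd.1.eigenvalues with hμ
  have hμpos : ∀ i, 0 < μ i := fun i => hBpd.eigenvalues_pos i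
  have hdetB : B.det = ∏ i, μ i := by
    have := hBpd.1.det_eq_prod_eigenvalues
    simpa using this
  have hsum : ∑ i, μ i = (Fintype.card n : ℝ) := by
    have h1 := trace_eq_sum_eigs hBpd.1
    have h2 : B.trace = (Fintype.card n : ℝ) := by
      simp [Matrix.trace, Matrix.diag, hBdiag]
    rw [h2] at h1
    linarith
  set N := (Fintype.card n : ℝ) with hN
  have hNpos : 0 < N := by positivity
  have key := Real.geom_mean_le_arith_mean_weighted Finset.univ (fun _ => N⁻¹) μ
    (fun i _ => by positivity) (by simp only [Finset.sum_const, Finset.card_univ, nsmul_eq_mul]; rw [mul_inv_cancel₀ (by exact_mod_cast Fintype.card_ne_zero : (Fintype.card n : ℝ) ≠ 0)])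
    (fun i _ => (hμpos i).le)
  have h1 : ∑ i, N⁻¹ * μ i = 1 := by
    rw [← Finset.mul_sum, hsum]
    exact inv_mul_cancel₀ hNpos.ne'
  rw [h1] at key
  have hprod1 : ∏ i, μ i ≤ 1 := by
    have hnn : 0 ≤ ∏ i, μ i ^ N⁻¹ :=
      Finset.prod_nonneg fun i _ => Real.rpow_nonneg (hμpos i).le _
    have hpow : (∏ i, μ i ^ N⁻¹) ^ (Fintype.card n) ≤ 1 :=
      pow_le_one₀ hnn key
    calc ∏ i, μ i = (∏ i, μ i ^ N⁻¹) ^ (Fintype.card n) := by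
          rw [← Finset.prod_pow]
          refine Finset.prod_congr rfl fun i _ => ?_
          rw [← Real.rpow_natCast (μ i ^ N⁻¹), ← Real.rpow_mul (hμpos i).le, hN,
            inv_mul_cancel₀ (by exact_mod_cast Fintype.card_ne_zero : (Fintype.card n : ℝ) ≠ 0),
            Real.rpow_one]
      _ ≤ 1 := hpow
  have hdetB2 : B.det = (∏ i, e i) * A.det * (∏ i, e i) := by
    rw [hB, Matrix.det_mul, Matrix.det_mul, det_diagonal]
  have hprodE : (∏ i, e i) * (∏ i, e i) = (∏ i, d i)⁻¹ := by
    rw [← Finset.prod_mul_distrib, ← Finset.prod_inv_distrib]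
    refine Finset.prod_congr rfl fun i _ => ?_
    rw [hee]
    rw [← mul_inv, Real.mul_self_sqrt (hd i).le]
  have hdpos : 0 < ∏ i, d i := Finset.prod_pos fun i _ => hd i
  have : A.det * (∏ i, d i)⁻¹ ≤ 1 := by
    calc A.det * (∏ i, d i)⁻¹ = B.det := by rw [hdetB2, ← hprodE]; ring
      _ = ∏ i, μ i := hdetB
      _ ≤ 1 := hprod1
  calc A.det = A.det * (∏ i, d i)⁻¹ * (∏ i, d i) := by field_simp
    _ ≤ 1 * (∏ i, d i) := by exact mul_le_mul_of_nonneg_right this hdpos.le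
    _ = ∏ i, d i := one_mul _

lemma l1norm_nonneg {m n : Type*} [Fintype m] [Fintype n] (A : Matrix m n ℝ) : 0 ≤ l1norm A :=
  Finset.sum_nonneg fun i _ => Finset.sum_nonneg fun j _ => abs_nonneg _

/-- Proposition 1, minimizer form: if `λ₁ ≥ |s_ij|` for all `i ≠ j` and `Θ̂`
minimizes the pdglasso objective over positive definite symmetric matrices, then
`diag(Θ̂)` is positive definite and also a minimizer. -/
theorem pdglasso_diagonal_minimizer (q : ℕ) (hq : 0 < q)
    (S : Matrix (Fin q ⊕ Fin q) (Fin q ⊕ Fin q) ℝ) (hS : S.IsSymm)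
    (l1 l2 : ℝ) (hl2 : 0 ≤ l2)
    (hl1 : ∀ i j : Fin q ⊕ Fin q, i ≠ j → |S i j| ≤ l1)
    (Θhat : Matrix (Fin q ⊕ Fin q) (Fin q ⊕ Fin q) ℝ) (hΘ : Θhat.PosDef) (hΘs : Θhat.IsSymm)
    (hmin : ∀ Θ : Matrix (Fin q ⊕ Fin q) (Fin q ⊕ Fin q) ℝ, Θ.PosDef → Θ.IsSymm →
      pdObjective S l1 l2 Θhat ≤ pdObjective S l1 l2 Θ) :
    (Matrix.diagonal fun i => Θhat i i).PosDef ∧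
      ∀ Θ : Matrix (Fin q ⊕ Fin q) (Fin q ⊕ Fin q) ℝ, Θ.PosDef → Θ.IsSymm →
        pdObjective S l1 l2 (Matrix.diagonal fun i => Θhat i i) ≤ pdObjective S l1 l2 Θ := by
  haveI : Nonempty (Fin q) := ⟨⟨0, hq⟩⟩
  have hdpos : ∀ i : Fin q ⊕ Fin q, 0 < Θhat i i := fun i => diag_pos' hΘ i
  set D : Matrix (Fin q ⊕ Fin q) (Fin q ⊕ Fin q) ℝ := Matrix.diagonal (fun i => Θhat i i) with hD
  have hDpd : D.PosDef := Matrix.PosDef.diagonal hdpos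
  have hsymm : ∀ i j : Fin q ⊕ Fin q, Θhat j i = Θhat i j := by
    intro i j
    have := congrFun (congrFun hΘs j) i
    simpa [Matrix.transpose_apply] using this.symm
  -- key inequality: L(D) ≤ L(Θhat)
  have key : pdObjective S l1 l2 D ≤ pdObjective S l1 l2 Θhat := by
    have hlog : -Real.log D.det ≤ -Real.log Θhat.det := by
      have h1 : Θhat.det ≤ D.det := by
        rw [hD, Matrix.det_diagonal]
        exact det_le_prod_diag hΘ
      exact neg_le_neg (Real.log_le_log hΘ.det_pos h1)
    have htr : (S * D).trace + l1 * l1norm D ≤ (S * Θhat).trace + l1 * l1norm Θhat := by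
      have expand : ∀ M : Matrix (Fin q ⊕ Fin q) (Fin q ⊕ Fin q) ℝ, (S * M).trace + l1 * l1norm M
          = ∑ i, ∑ j, (S i j * M j i + l1 * |M i j|) := by
        intro M
        rw [Matrix.trace, l1norm, Finset.mul_sum]
        simp only [Matrix.diag, Matrix.mul_apply, Finset.mul_sum]
        rw [← Finset.sum_add_distrib]
        exact Finset.sum_congr rfl fun i _ => (Finset.sum_add_distrib).symm
      rw [expand, expand]
      refine Finset.sum_le_sum fun i _ => Finset.sum_le_sum fun j _ => ?_
      by_cases hij : i = j
      · subst hij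
        simp [hD, Matrix.diagonal_apply_eq]
      · have hD0 : D i j = 0 := Matrix.diagonal_apply_ne _ hij
        have hD0' : D j i = 0 := Matrix.diagonal_apply_ne _ (Ne.symm hij)
        rw [hD0, hD0', hsymm i j]
        have h1 : |S i j * Θhat i j| ≤ l1 * |Θhat i j| := by
          rw [abs_mul]
          exact mul_le_mul_of_nonneg_right (hl1 i j hij) (abs_nonneg _)
        have := neg_abs_le (S i j * Θhat i j)
        simp only [mul_zero, abs_zero, add_zero]
        linarith
    have hblk : l2 * (l1norm (D.toBlocks₁₁ - D.toBlocks₂₂) + l1norm (D.toBlocks₁₂ - D.toBlocks₂₁))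
        ≤ l2 * (l1norm (Θhat.toBlocks₁₁ - Θhat.toBlocks₂₂)
            + l1norm (Θhat.toBlocks₁₂ - Θhat.toBlocks₂₁)) := by
      refine mul_le_mul_of_nonneg_left ?_ hl2
      have h12 : D.toBlocks₁₂ - D.toBlocks₂₁ = 0 := by
        ext a b
        simp [hD, Matrix.toBlocks₁₂, Matrix.toBlocks₂₁, Matrix.diagonal_apply]
      have h11 : l1norm (D.toBlocks₁₁ - D.toBlocks₂₂)
          ≤ l1norm (Θhat.toBlocks₁₁ - Θhat.toBlocks₂₂) := by
        rw [l1norm, l1norm]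
        refine Finset.sum_le_sum fun a _ => Finset.sum_le_sum fun b _ => ?_
        by_cases hab : a = b
        · subst hab
          simp [hD, Matrix.toBlocks₁₁, Matrix.toBlocks₂₂, Matrix.diagonal_apply]
        · have : (D.toBlocks₁₁ - D.toBlocks₂₂) a b = 0 := by
            simp [hD, Matrix.toBlocks₁₁, Matrix.toBlocks₂₂, Matrix.diagonal_apply, hab]
          rw [this, abs_zero]
          exact abs_nonneg _
      calc l1norm (D.toBlocks₁₁ - D.toBlocks₂₂) + l1norm (D.toBlocks₁₂ - D.toBlocks₂₁)
          = l1norm (D.toBlocks₁₁ - D.toBlocks₂₂) + 0 := by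
            rw [h12]; simp [l1norm]
        _ ≤ l1norm (Θhat.toBlocks₁₁ - Θhat.toBlocks₂₂)
            + l1norm (Θhat.toBlocks₁₂ - Θhat.toBlocks₂₁) := by
            have := l1norm_nonneg (Θhat.toBlocks₁₂ - Θhat.toBlocks₂₁)
            linarith
    unfold pdObjective
    linarith
  exact ⟨hDpd, fun Θ hpd hsym => le_trans key (hmin Θ hpd hsym)⟩
end

section
/- Let S and Θ be real symmetric matrices indexed by ι = Fin q ⊕ Fin q, let J be the swap permutation matrix, and suppose λ₂ ≥ λ₂^sym. Then trace(S·((Θ + JΘJ)/2)) − trace(S·Θ) ≤ λ₂·(‖Θ_LL − Θ_RR‖₁ + ‖Θ_LR − Θ_RL‖₁). -/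
open Matrix Sum

private lemma sum_swap_eq {q : ℕ} (f : (Fin q ⊕ Fin q) → ℝ) :
    ∑ a, f a = ∑ a, f (Sum.swap a) :=
  (Fintype.sum_equiv (Equiv.sumComm (Fin q) (Fin q)) _ _ (fun a => by simp)).symm

private lemma sum2_swap_eq {q : ℕ} (g : (Fin q ⊕ Fin q) → (Fin q ⊕ Fin q) → ℝ) :
    ∑ a, ∑ b, g a b = ∑ a, ∑ b, g (Sum.swap a) (Sum.swap b) := by
  rw [sum_swap_eq (fun a => ∑ b, g a b)]
  exact Finset.sum_congr rfl fun a _ => sum_swap_eq _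


/-- if `λ₂ ≥ λ₂^sym` then the trace gain of symmetrization is dominated by
the fused penalty: `tr(S Θ̄) − tr(S Θ) ≤ λ₂ (‖Θ_LL − Θ_RR‖₁ + ‖Θ_LR − Θ_RL‖₁)`. -/
theorem trace_symmetrization_le_penalty (q : ℕ) (hq : 0 < q)
    (S Θ : Matrix (Fin q ⊕ Fin q) (Fin q ⊕ Fin q) ℝ) (hS : S.IsSymm) (hΘ : Θ.IsSymm)
    (l2 : ℝ)
    (hl2 : ∀ i j : Fin q,
      max (|S (inl i) (inl j) - S (inr i) (inr j)| / 2)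
          (|S (inr i) (inl j) - S (inl i) (inr j)| / 2) ≤ l2) :
    (S * ((1 / 2 : ℝ) • (Θ + Jswap q * Θ * Jswap q))).trace - (S * Θ).trace
      ≤ l2 * (l1norm (Θ.toBlocks₁₁ - Θ.toBlocks₂₂) + l1norm (Θ.toBlocks₁₂ - Θ.toBlocks₂₁)) := by
  have hJ : ∀ a b, (Jswap q * Θ * Jswap q) a b = Θ a.swap b.swap := by
    intro a b
    cases a <;> cases b <;>
      simp [Jswap, mul_apply, Fintype.sum_sum_type, fromBlocks, one_apply]
  have key : ∀ a b : Fin q ⊕ Fin q, |S a.swap b.swap - S a b| ≤ 2 * l2 := by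
    intro a b
    cases a with
    | inl i => cases b with
      | inl j =>
        have h := (le_max_left _ _).trans (hl2 i j)
        rw [abs_sub_comm]; simp only [Sum.swap_inl]; linarith
      | inr j =>
        have h := (le_max_right _ _).trans (hl2 i j)
        simp only [Sum.swap_inl, Sum.swap_inr]; linarith
    | inr i => cases b with
      | inl j =>
        have h := (le_max_right _ _).trans (hl2 i j)
        rw [abs_sub_comm]; simp only [Sum.swap_inr, Sum.swap_inl]; linarith
      | inr j =>
        have h := (le_max_left _ _).trans (hl2 i j)
        simp only [Sum.swap_inr]; linarith
  have h1 : (S * ((1 / 2 : ℝ) • (Θ + Jswap q * Θ * Jswap q))).trace - (S * Θ).trace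
      = (1/2 : ℝ) * ((S * (Jswap q * Θ * Jswap q)).trace - (S * Θ).trace) := by
    rw [Matrix.mul_smul, Matrix.mul_add, trace_smul, trace_add]
    simp; ring
  have htr : ∀ M : Matrix (Fin q ⊕ Fin q) (Fin q ⊕ Fin q) ℝ,
      (S * M).trace = ∑ a, ∑ b, S a b * M b a := by
    intro M; simp [trace, mul_apply, diag]
  have h2 : (S * (Jswap q * Θ * Jswap q)).trace - (S * Θ).trace
      = ∑ a, ∑ b, (S a.swap b.swap - S a b) * Θ b a := by
    rw [htr, htr]
    have e1 : ∑ a, ∑ b, S a b * (Jswap q * Θ * Jswap q) b a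
        = ∑ a, ∑ b, S a.swap b.swap * Θ b a := by
      rw [sum2_swap_eq (fun a b => S (Sum.swap a) (Sum.swap b) * Θ b a)]
      simp [hJ]
    rw [e1, ← Finset.sum_sub_distrib]
    refine Finset.sum_congr rfl fun a _ => ?_
    rw [← Finset.sum_sub_distrib]
    exact Finset.sum_congr rfl fun b _ => by ring
  -- antisymmetrization
  have hA : ∑ a, ∑ b, (S a.swap b.swap - S a b) * Θ b.swap a.swap
      = - ∑ a, ∑ b, (S a.swap b.swap - S a b) * Θ b a := by
    rw [sum2_swap_eq (fun a b => (S (Sum.swap a) (Sum.swap b) - S a b) * Θ (Sum.swap b) (Sum.swap a))]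
    simp only [Sum.swap_swap]
    have e : ∀ a b : Fin q ⊕ Fin q, (S a b - S a.swap b.swap) * Θ b a
        = -((S a.swap b.swap - S a b) * Θ b a) := fun a b => by ring
    simp only [e, Finset.sum_neg_distrib]
  have h3 : ∑ a, ∑ b, (S a.swap b.swap - S a b) * Θ b a
      = (1/2 : ℝ) * ∑ a, ∑ b, (S a.swap b.swap - S a b) * (Θ b a - Θ b.swap a.swap) := by
    have esplit : ∑ a, ∑ b, (S a.swap b.swap - S a b) * (Θ b a - Θ b.swap a.swap)
        = (∑ a, ∑ b, (S a.swap b.swap - S a b) * Θ b a)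
          - ∑ a, ∑ b, (S a.swap b.swap - S a b) * Θ b.swap a.swap := by
      simp only [mul_sub, Finset.sum_sub_distrib]
    rw [esplit, hA]; ring
  -- per-term bound
  have hb : ∑ a, ∑ b, (S a.swap b.swap - S a b) * (Θ b a - Θ b.swap a.swap)
      ≤ ∑ a : Fin q ⊕ Fin q, ∑ b : Fin q ⊕ Fin q, 2 * l2 * |Θ b a - Θ b.swap a.swap| := by
    refine Finset.sum_le_sum fun a _ => Finset.sum_le_sum fun b _ => ?_
    calc (S a.swap b.swap - S a b) * (Θ b a - Θ b.swap a.swap)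
        ≤ |(S a.swap b.swap - S a b) * (Θ b a - Θ b.swap a.swap)| := le_abs_self _
      _ = |S a.swap b.swap - S a b| * |Θ b a - Θ b.swap a.swap| := abs_mul _ _
      _ ≤ 2 * l2 * |Θ b a - Θ b.swap a.swap| :=
          mul_le_mul_of_nonneg_right (key a b) (abs_nonneg _)
  -- sum of |Δ|
  have hsum : ∑ a : Fin q ⊕ Fin q, ∑ b : Fin q ⊕ Fin q, |Θ b a - Θ b.swap a.swap|
      = 2 * (l1norm (Θ.toBlocks₁₁ - Θ.toBlocks₂₂) + l1norm (Θ.toBlocks₁₂ - Θ.toBlocks₂₁)) := by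
    have hP1 : (∑ a : Fin q, ∑ b : Fin q, |Θ (inl b) (inl a) - Θ (inr b) (inr a)|)
        = l1norm (Θ.toBlocks₁₁ - Θ.toBlocks₂₂) := by
      rw [Finset.sum_comm]; simp [l1norm, toBlocks₁₁, toBlocks₂₂]
    have hP4 : (∑ a : Fin q, ∑ b : Fin q, |Θ (inr b) (inr a) - Θ (inl b) (inl a)|)
        = l1norm (Θ.toBlocks₁₁ - Θ.toBlocks₂₂) := by
      rw [← hP1]
      exact Finset.sum_congr rfl fun a _ => Finset.sum_congr rfl fun b _ => abs_sub_comm _ _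
    have hP3 : (∑ a : Fin q, ∑ b : Fin q, |Θ (inl b) (inr a) - Θ (inr b) (inl a)|)
        = l1norm (Θ.toBlocks₁₂ - Θ.toBlocks₂₁) := by
      rw [Finset.sum_comm]; simp [l1norm, toBlocks₁₂, toBlocks₂₁]
    have hP2 : (∑ a : Fin q, ∑ b : Fin q, |Θ (inr b) (inl a) - Θ (inl b) (inr a)|)
        = l1norm (Θ.toBlocks₁₂ - Θ.toBlocks₂₁) := by
      rw [← hP3]
      exact Finset.sum_congr rfl fun a _ => Finset.sum_congr rfl fun b _ => abs_sub_comm _ _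
    simp only [Fintype.sum_sum_type, Sum.swap_inl, Sum.swap_inr, Finset.sum_add_distrib]
    rw [hP1, hP2, hP3, hP4]; ring
  rw [h1, h2, h3]
  have hfinal : ∑ a : Fin q ⊕ Fin q, ∑ b : Fin q ⊕ Fin q, 2 * l2 * |Θ b a - Θ b.swap a.swap|
      = 2 * l2 * (2 * (l1norm (Θ.toBlocks₁₁ - Θ.toBlocks₂₂) + l1norm (Θ.toBlocks₁₂ - Θ.toBlocks₂₁))) := by
    simp only [← Finset.mul_sum]
    rw [hsum]
  linarith [hb, hfinal]
end

section
/- Let S and Θ be real symmetric matrices indexed by a finite type ι, and suppose λ₁ ≥ |S i j| for all i, j ∈ ι with i ≠ j. Then trace(S·diag(Θ)) − trace(S·Θ) + λ₁·(‖diag(Θ)‖₁ − ‖Θ‖₁) ≤ 0, where diag(Θ) is the diagonal matrix with the same diagonal as Θ and ‖A‖₁ = Σ_{i,j} |A i j|. (Key step in the proof of Proposition 1.) -/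
open Matrix Sum

/-- key step in the proof of Proposition 1, over a general finite index
type: `tr(S diag(Θ)) − tr(S Θ) + λ₁ (‖diag(Θ)‖₁ − ‖Θ‖₁) ≤ 0` when `λ₁ ≥ |s_ij|` for all
`i ≠ j`. -/
theorem trace_l1_diagonal_step {ι : Type*} [Fintype ι] [DecidableEq ι]
    (S Θ : Matrix ι ι ℝ) (hS : S.IsSymm) (hΘ : Θ.IsSymm)
    (l1 : ℝ) (hl1 : ∀ i j : ι, i ≠ j → |S i j| ≤ l1) :
    (S * Matrix.diagonal fun i => Θ i i).trace - (S * Θ).trace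
      + l1 * (l1norm (Matrix.diagonal fun i => Θ i i) - l1norm Θ) ≤ 0 := by
  have htr : ∀ (A B : Matrix ι ι ℝ), (A * B).trace = ∑ i, ∑ j, A i j * B j i := by
    intro A B; simp [Matrix.trace, Matrix.mul_apply, Matrix.diag]
  have hl : ∀ A : Matrix ι ι ℝ, l1norm A = ∑ i, ∑ j, |A j i| := by
    intro A; exact Finset.sum_comm
  rw [htr, htr, hl, hl]
  set D := Matrix.diagonal fun i => Θ i i with hDdef
  have key : (∑ i, ∑ j, S i j * D j i) - (∑ i, ∑ j, S i j * Θ j i)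
      + l1 * ((∑ i, ∑ j, |D j i|) - ∑ i, ∑ j, |Θ j i|)
      = ∑ i, ∑ j, (S i j * D j i - S i j * Θ j i + l1 * (|D j i| - |Θ j i|)) := by
    simp only [Finset.sum_add_distrib, Finset.sum_sub_distrib, Finset.mul_sum, mul_sub]
  rw [key]
  apply Finset.sum_nonpos; intro i _
  apply Finset.sum_nonpos; intro j _
  by_cases h : i = j
  · subst h; simp [hDdef]
  · have hD0 : D j i = 0 := by simp [hDdef, Matrix.diagonal, Ne.symm h]
    rw [hD0]
    simp only [abs_zero, mul_zero, zero_sub, mul_neg]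
    nlinarith [hl1 i j h, abs_nonneg (Θ j i), neg_abs_le (S i j * Θ j i),
      abs_mul (S i j) (Θ j i), abs_nonneg (S i j)]
end

section
/- Let S and Θ be real symmetric matrices indexed by ι = Fin q ⊕ Fin q, and suppose λ₁ ≥ |S (inl i) (inr j)| for all i, j ∈ Fin q. Let Θ̄ := fromBlocks Θ_LL 0 0 Θ_RR be the block-diagonal truncation of Θ. Then trace(S·Θ̄) − trace(S·Θ) + λ₁·(‖Θ̄‖₁ − ‖Θ‖₁) ≤ 0. (Key step in the proof of Proposition 2.) -/
open Matrix Sum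

/-- key step in the proof of Proposition 2:
`tr(S Θ̄) − tr(S Θ) + λ₁ (‖Θ̄‖₁ − ‖Θ‖₁) ≤ 0` for the block-diagonal truncation
`Θ̄ = fromBlocks Θ_LL 0 0 Θ_RR`, when `λ₁ ≥ |s_{i j'}|` for all across-block pairs. -/
theorem trace_l1_blockdiagonal_step (q : ℕ) (hq : 0 < q)
    (S Θ : Matrix (Fin q ⊕ Fin q) (Fin q ⊕ Fin q) ℝ) (hS : S.IsSymm) (hΘ : Θ.IsSymm)
    (l1 : ℝ) (hl1 : ∀ i j : Fin q, |S (inl i) (inr j)| ≤ l1) :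
    (S * Matrix.fromBlocks Θ.toBlocks₁₁ 0 0 Θ.toBlocks₂₂).trace - (S * Θ).trace
      + l1 * (l1norm (Matrix.fromBlocks Θ.toBlocks₁₁ 0 0 Θ.toBlocks₂₂) - l1norm Θ) ≤ 0 := by
  have hΘ' : ∀ a b, Θ b a = Θ a b := fun a b => hΘ.apply a b
  have hS' : ∀ a b, S b a = S a b := fun a b => hS.apply a b
  have htr : (S * Matrix.fromBlocks Θ.toBlocks₁₁ 0 0 Θ.toBlocks₂₂).trace - (S * Θ).trace
      = -(∑ i, ∑ j, S (inl i) (inr j) * Θ (inr j) (inl i))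
        - ∑ i, ∑ j, S (inr i) (inl j) * Θ (inl j) (inr i) := by
    simp only [Matrix.trace, Matrix.diag, Matrix.mul_apply, Fintype.sum_sum_type,
      Matrix.fromBlocks_apply₁₁, Matrix.fromBlocks_apply₁₂, Matrix.fromBlocks_apply₂₁,
      Matrix.fromBlocks_apply₂₂, Matrix.toBlocks₁₁, Matrix.toBlocks₂₂, Matrix.of_apply,
      Matrix.zero_apply, mul_zero, Finset.sum_const_zero, add_zero, zero_add,
      Finset.sum_add_distrib]
    ring
  have hnorm : l1norm (Matrix.fromBlocks Θ.toBlocks₁₁ 0 0 Θ.toBlocks₂₂) - l1norm Θ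
      = -(∑ i, ∑ j, |Θ (inl i) (inr j)|) - ∑ i, ∑ j, |Θ (inr i) (inl j)| := by
    simp only [l1norm, Fintype.sum_sum_type, Matrix.fromBlocks_apply₁₁,
      Matrix.fromBlocks_apply₁₂, Matrix.fromBlocks_apply₂₁, Matrix.fromBlocks_apply₂₂,
      Matrix.toBlocks₁₁, Matrix.toBlocks₂₂, Matrix.of_apply, Matrix.zero_apply,
      abs_zero, Finset.sum_const_zero, add_zero, zero_add, Finset.sum_add_distrib]
    ring
  rw [htr, hnorm]
  have key : -(∑ i, ∑ j, S (inl i) (inr j) * Θ (inr j) (inl i))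
        - (∑ i, ∑ j, S (inr i) (inl j) * Θ (inl j) (inr i))
      + l1 * (-(∑ i, ∑ j, |Θ (inl i) (inr j)|) - ∑ i, ∑ j, |Θ (inr i) (inl j)|)
      = (∑ i : Fin q, ∑ j : Fin q,
          (-(S (inl i) (inr j) * Θ (inr j) (inl i)) - l1 * |Θ (inl i) (inr j)|))
      + (∑ i : Fin q, ∑ j : Fin q,
          (-(S (inr i) (inl j) * Θ (inl j) (inr i)) - l1 * |Θ (inr i) (inl j)|)) := by
    simp only [Finset.sum_sub_distrib, ← Finset.mul_sum, Finset.sum_neg_distrib]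
    ring
  rw [key]
  have bound : ∀ (a b : Fin q ⊕ Fin q), |S a b| ≤ l1 →
      -(S a b * Θ b a) - l1 * |Θ a b| ≤ 0 := by
    intro a b h
    have h1 : -(S a b * Θ b a) ≤ |S a b| * |Θ a b| := by
      rw [hΘ' b a, ← abs_mul]
      exact neg_le_abs _
    have h2 : |S a b| * |Θ a b| ≤ l1 * |Θ a b| :=
      mul_le_mul_of_nonneg_right h (abs_nonneg _)
    linarith
  have h1 : (∑ i : Fin q, ∑ j : Fin q,
      (-(S (inl i) (inr j) * Θ (inr j) (inl i)) - l1 * |Θ (inl i) (inr j)|)) ≤ 0 :=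
    Finset.sum_nonpos fun i _ => Finset.sum_nonpos fun j _ => bound _ _ (hl1 i j)
  have h2 : (∑ i : Fin q, ∑ j : Fin q,
      (-(S (inr i) (inl j) * Θ (inl j) (inr i)) - l1 * |Θ (inr i) (inl j)|)) ≤ 0 :=
    Finset.sum_nonpos fun i _ => Finset.sum_nonpos fun j _ =>
      bound _ _ (by rw [hS' (inl j) (inr i)]; exact hl1 j i)
  linarith
end
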